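/- For every positive integer m and every real x ≥ 0, the regularized lower incomplete gamma function satisfies γ(m, x)/Γ(m) ≤ (1 − e^{−x})^m, where γ(m,x) = ∫₀ˣ t^{m−1} e^{−t} dt and Γ(m) = (m−1)!. -/

import Mathlib

open MeasureTheory Real

/-- The lower incomplete gamma function with integer shape `m`:
`γ(m, x) = ∫₀ˣ t^(m-1) e^(-t) dt`. -/
noncomputable def lowerIncGamma (m : ℕ) (x : ℝ) : ℝ :=
  ∫ t in Set.Ioc (0 : ℝ) x, t ^ (m - 1) * Real.exp (-t)

lemma ligAux_intble (n : ℕ) (x : ℝ) :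
    IntervalIntegrable (fun t => t ^ n * Real.exp (-t)) volume 0 x := by
  apply Continuous.intervalIntegrable
  continuity

lemma ligAux_ibp (n : ℕ) (x : ℝ) :
    ∫ t in (0:ℝ)..x, t ^ (n+1) * Real.exp (-t)
      = (n+1) * (∫ t in (0:ℝ)..x, t ^ n * Real.exp (-t)) - x ^ (n+1) * Real.exp (-x) := by
  have h := intervalIntegral.integral_mul_deriv_eq_deriv_mul
    (u := fun t => t ^ (n+1)) (u' := fun t => (n+1 : ℝ) * t ^ n)
    (v := fun t => -Real.exp (-t)) (v' := fun t => Real.exp (-t))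
    (a := 0) (b := x)
    (fun t _ => by simpa using (hasDerivAt_pow (n+1) t))
    (fun t _ => by
      have := ((Real.hasDerivAt_exp (-t)).comp t (hasDerivAt_neg t)).neg
      exact this.congr_deriv (by simp))
    (by apply Continuous.intervalIntegrable; continuity)
    (by apply Continuous.intervalIntegrable; continuity)
  have h2 : ∫ t in (0:ℝ)..x, (n+1 : ℝ) * t ^ n * -Real.exp (-t)
      = -((n+1 : ℝ) * ∫ t in (0:ℝ)..x, t ^ n * Real.exp (-t)) := by
    have he : (fun t : ℝ => (n+1 : ℝ) * t ^ n * -Real.exp (-t))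
        = fun t : ℝ => -((n+1 : ℝ) * (t ^ n * Real.exp (-t))) := by funext t; ring
    rw [intervalIntegral.integral_congr (g := fun t : ℝ => -((n+1 : ℝ) * (t ^ n * Real.exp (-t)))) (fun t _ => by ring),
      intervalIntegral.integral_neg, intervalIntegral.integral_const_mul]
  rw [h2] at h
  rw [h]; ring

lemma ligAux_le (n : ℕ) {x : ℝ} (hx : 0 ≤ x) :
    ∫ t in (0:ℝ)..x, t ^ n * Real.exp (-t) ≤ x ^ (n+1) / (n+1) := by
  have h1 : ∫ t in (0:ℝ)..x, t ^ n * Real.exp (-t) ≤ ∫ t in (0:ℝ)..x, t ^ n := by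
    apply intervalIntegral.integral_mono_on hx (ligAux_intble n x)
      (by apply Continuous.intervalIntegrable; continuity)
    intro t ht
    have h0 : (0:ℝ) ≤ t := ht.1
    nlinarith [Real.exp_le_one_iff.2 (neg_nonpos.2 h0), pow_nonneg h0 n,
      Real.exp_pos (-t)]
  have h2 : ∫ t in (0:ℝ)..x, t ^ n = x ^ (n+1) / (n+1) := by
    simpa using integral_pow (a := (0:ℝ)) (b := x) n
  linarith

lemma ligAux_nonneg (n : ℕ) {x : ℝ} (hx : 0 ≤ x) :
    0 ≤ ∫ t in (0:ℝ)..x, t ^ n * Real.exp (-t) := by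
  apply intervalIntegral.integral_nonneg hx
  intro t ht
  exact mul_nonneg (pow_nonneg ht.1 n) (Real.exp_pos _).le

lemma ligAux_main (n : ℕ) {x : ℝ} (hx : 0 ≤ x) :
    (∫ t in (0:ℝ)..x, t ^ n * Real.exp (-t)) / (Nat.factorial n : ℝ)
      ≤ (1 - Real.exp (-x)) ^ (n+1) := by
  induction n with
  | zero =>
      have : ∫ t in (0:ℝ)..x, t ^ 0 * Real.exp (-t) = 1 - Real.exp (-x) := by
        simp only [pow_zero, one_mul]
        rw [intervalIntegral.integral_comp_neg fun t => Real.exp t, integral_exp]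
        simp
      simp [this]
  | succ n ih =>
      have hrec := ligAux_ibp n x
      have hle := ligAux_le n hx
      have hnn := ligAux_nonneg n hx
      set I := ∫ t in (0:ℝ)..x, t ^ n * Real.exp (-t) with hI
      have hE1 : Real.exp (-x) ≤ 1 := Real.exp_le_one_iff.2 (neg_nonpos.2 hx)
      have hE0 : 0 < Real.exp (-x) := Real.exp_pos _
      have hfac : (Nat.factorial (n+1) : ℝ) = (n+1) * (Nat.factorial n : ℝ) := by
        push_cast [Nat.factorial_succ]; ring
      have hfn : (0:ℝ) < (Nat.factorial n : ℝ) := by positivity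
      rw [hrec, hfac]
      have key : (1 - Real.exp (-x)) * (I / (Nat.factorial n : ℝ))
          ≤ (1 - Real.exp (-x)) ^ (n+2) := by
        calc (1 - Real.exp (-x)) * (I / (Nat.factorial n : ℝ))
            ≤ (1 - Real.exp (-x)) * (1 - Real.exp (-x)) ^ (n+1) :=
              mul_le_mul_of_nonneg_left ih (by linarith)
          _ = (1 - Real.exp (-x)) ^ (n+2) := by ring
      have expand : ((n+1 : ℝ) * I - x ^ (n+1) * Real.exp (-x)) / ((n+1) * (Nat.factorial n : ℝ))
          = I / (Nat.factorial n : ℝ) - x ^ (n+1) * Real.exp (-x) / ((n+1) * (Nat.factorial n : ℝ)) := by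
        field_simp
      rw [expand]
      have hIx : I / (Nat.factorial n : ℝ) ≤ x ^ (n+1) / ((n+1) * (Nat.factorial n : ℝ)) := by
        rw [div_le_div_iff₀ hfn (by positivity)]
        calc I * ((n+1) * (Nat.factorial n : ℝ)) = (I * (n+1)) * (Nat.factorial n : ℝ) := by ring
          _ ≤ x ^ (n+1) * (Nat.factorial n : ℝ) := by
              apply mul_le_mul_of_nonneg_right _ hfn.le
              have := hle
              rw [le_div_iff₀ (by positivity : (0:ℝ) < (n:ℝ)+1)] at this
              push_cast
              linarith
      -- goal: I/n! - x^{n+1} E / ((n+1) n!) ≤ (1-E)^{n+2}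
      have h3 : Real.exp (-x) * (I / (Nat.factorial n : ℝ))
          ≤ x ^ (n+1) * Real.exp (-x) / ((n+1) * (Nat.factorial n : ℝ)) := by
        calc Real.exp (-x) * (I / (Nat.factorial n : ℝ))
            ≤ Real.exp (-x) * (x ^ (n+1) / ((n+1) * (Nat.factorial n : ℝ))) :=
              mul_le_mul_of_nonneg_left hIx hE0.le
          _ = x ^ (n+1) * Real.exp (-x) / ((n+1) * (Nat.factorial n : ℝ)) := by ring
      nlinarith [key]

/-- For every positive integer `m` and real `x ≥ 0`,
`γ(m, x) / Γ(m) ≤ (1 - e^(-x))^m`, where `Γ(m) = (m-1)!`. -/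
theorem lowerIncGamma_div_factorial_le (m : ℕ) (hm : 0 < m) (x : ℝ) (hx : 0 ≤ x) :
    lowerIncGamma m x / (Nat.factorial (m - 1) : ℝ) ≤ (1 - Real.exp (-x)) ^ m := by
  obtain ⟨n, rfl⟩ := Nat.exists_eq_add_of_lt hm
  simp only [zero_add] at *
  have heq : lowerIncGamma (n+1) x = ∫ t in (0:ℝ)..x, t ^ n * Real.exp (-t) := by
    rw [lowerIncGamma, Nat.add_sub_cancel, intervalIntegral.integral_of_le hx]
  rw [heq, Nat.add_sub_cancel]
  exact ligAux_main n hx
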